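/- The set of differences 2E − E = {2y − x : x ∈ E, y ∈ E} is exactly the closed interval [−1/3, 2/3]. Consequently, the segments joining a point of E on the line y = 0 to a point of 2E + i on the line y = 1 realize every slope of segments joining the intervals [0, 1/3] and [i, 2/3 + i]. -/

import Mathlib

open MeasureTheory

/-- The Cantor-like set `E = {∑_{j=1}^∞ ε_j 4^{-j} : ε_j ∈ {0,1}}`. -/
def E : Set ℝ :=
  {x | ∃ ε : ℕ → ℝ, (∀ j, ε j = 0 ∨ ε j = 1) ∧ x = ∑' j : ℕ, ε j / 4 ^ (j + 1)}

lemma summable_aux (f : ℕ → ℝ) (C : ℝ) (h : ∀ j, |f j| ≤ C) :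
    Summable (fun j => f j / 4 ^ (j + 1)) := by
  apply Summable.of_norm
  have hg : Summable (fun j : ℕ => C * (1/4 : ℝ) ^ (j+1)) := by
    apply Summable.mul_left
    exact (summable_geometric_of_lt_one (by norm_num) (by norm_num)).comp_injective
      (add_left_injective 1)
  refine hg.of_nonneg_of_le (fun j => norm_nonneg _) (fun j => ?_)
  rw [Real.norm_eq_abs, abs_div, abs_of_nonneg (by positivity : (0:ℝ) ≤ 4 ^ (j+1))]
  rw [div_eq_mul_inv, ← inv_pow, ← one_div]
  exact mul_le_mul_of_nonneg_right (h j) (by positivity)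

lemma tsum_one_div : ∑' j : ℕ, (1:ℝ) / 4 ^ (j + 1) = 1/3 := by
  have : ∑' j : ℕ, (1:ℝ) / 4 ^ (j + 1) = ∑' j : ℕ, (1/4 : ℝ) * (1/4)^j := by
    congr 1; funext j; rw [pow_succ, one_div_pow]; ring
  rw [this, tsum_mul_left, tsum_geometric_of_lt_one (by norm_num) (by norm_num)]
  norm_num

noncomputable def Tseq (t : ℝ) : ℕ → ℝ
  | 0 => t
  | n + 1 => 4 * Tseq t n - min (⌊4 * Tseq t n⌋.toNat) 3

noncomputable def dig (t : ℝ) (n : ℕ) : ℕ := min (⌊4 * Tseq t n⌋.toNat) 3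

lemma dig_le (t : ℝ) (n : ℕ) : dig t n ≤ 3 := min_le_right _ _

lemma step_mem {s : ℝ} (hs : s ∈ Set.Icc (0:ℝ) 1) :
    4 * s - (min (⌊4 * s⌋.toNat) 3 : ℕ) ∈ Set.Icc (0:ℝ) 1 := by
  obtain ⟨h0, h1⟩ := hs
  have hf0 : (0:ℤ) ≤ ⌊4 * s⌋ := Int.le_floor.2 (by norm_num; linarith)
  have hk1 : ((⌊4 * s⌋ : ℤ) : ℝ) ≤ 4 * s := Int.floor_le _
  have hk2 : 4 * s < ⌊4 * s⌋ + 1 := Int.lt_floor_add_one _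
  have hf4 : ⌊4 * s⌋ ≤ 4 := by exact_mod_cast hk1.trans (by push_cast; linarith : 4 * s ≤ ((4:ℤ):ℝ))
  interval_cases h : ⌊4 * s⌋ <;>
    simp only [h, Int.toNat_natCast, Int.toNat_zero, Int.toNat_one] at * <;>
    norm_num <;> constructor <;> push_cast at * <;> linarith


lemma Tseq_mem {t : ℝ} (ht : t ∈ Set.Icc (0:ℝ) 1) : ∀ n, Tseq t n ∈ Set.Icc (0:ℝ) 1
  | 0 => ht
  | n + 1 => step_mem (Tseq_mem ht n)

lemma partial_sum {t : ℝ} (n : ℕ) :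
    ∑ j ∈ Finset.range n, (dig t j : ℝ) / 4 ^ (j + 1) + Tseq t n / 4 ^ n = t := by
  induction n with
  | zero => simp [Tseq]
  | succ n ih =>
    rw [Finset.sum_range_succ]
    have hT : Tseq t (n+1) = 4 * Tseq t n - ((dig t n : ℕ) : ℝ) := rfl
    rw [hT]
    have h2 : (4 * Tseq t n - ((dig t n : ℕ) : ℝ)) / 4 ^ (n+1)
        = Tseq t n / 4 ^ n - (dig t n : ℝ) / 4 ^ (n+1) := by
      rw [pow_succ]
      field_simp
    rw [h2]
    linarith

lemma expansion {t : ℝ} (ht : t ∈ Set.Icc (0:ℝ) 1) :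
    ∑' j : ℕ, (dig t j : ℝ) / 4 ^ (j + 1) = t := by
  have hsum : Summable (fun j => (dig t j : ℝ) / 4 ^ (j + 1)) := by
    apply summable_aux _ 3
    intro j
    rw [abs_of_nonneg (by positivity)]
    exact_mod_cast dig_le t j
  have h1 : Filter.Tendsto (fun n => ∑ j ∈ Finset.range n, (dig t j : ℝ) / 4 ^ (j + 1))
      Filter.atTop (nhds (∑' j : ℕ, (dig t j : ℝ) / 4 ^ (j + 1))) :=
    hsum.hasSum.tendsto_sum_nat
  have h2 : Filter.Tendsto (fun n => ∑ j ∈ Finset.range n, (dig t j : ℝ) / 4 ^ (j + 1))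
      Filter.atTop (nhds t) := by
    have key : ∀ n, ∑ j ∈ Finset.range n, (dig t j : ℝ) / 4 ^ (j + 1) = t - Tseq t n / 4 ^ n := by
      intro n; have := partial_sum (t := t) n; linarith
    simp only [key]
    have : Filter.Tendsto (fun n : ℕ => Tseq t n / 4 ^ n) Filter.atTop (nhds 0) := by
      apply squeeze_zero (fun n => by have := (Tseq_mem ht n).1; positivity)
        (fun n => ?_)
        (tendsto_pow_atTop_nhds_zero_of_lt_one (by norm_num) (by norm_num : (1/4:ℝ) < 1))
      have hle := (Tseq_mem ht n).2
      rw [div_pow, one_pow]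
      gcongr
    simpa using Filter.Tendsto.const_sub t this
  exact tendsto_nhds_unique h1 h2

noncomputable def epsOf (d : ℕ) : ℝ := if d % 2 = 0 then 1 else 0
noncomputable def delOf (d : ℕ) : ℝ := if 2 ≤ d then 1 else 0

lemma epsOf_bit (d : ℕ) : epsOf d = 0 ∨ epsOf d = 1 := by
  unfold epsOf; split <;> simp

lemma delOf_bit (d : ℕ) : delOf d = 0 ∨ delOf d = 1 := by
  unfold delOf; split <;> simp

lemma combo (d : ℕ) (hd : d ≤ 3) : 2 * delOf d - epsOf d = (d : ℝ) - 1 := by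
  interval_cases d <;> simp [epsOf, delOf] <;> norm_num

lemma E_summable {ε : ℕ → ℝ} (hε : ∀ j, ε j = 0 ∨ ε j = 1) :
    Summable (fun j => ε j / 4 ^ (j + 1)) := by
  apply summable_aux _ 1
  intro j
  rcases hε j with h | h <;> rw [h] <;> norm_num

lemma E_bounds {z : ℝ} (hz : z ∈ E) : z ∈ Set.Icc (0:ℝ) (1/3) := by
  obtain ⟨ε, hε, rfl⟩ := hz
  constructor
  · exact tsum_nonneg (fun j => by rcases hε j with h | h <;> rw [h] <;> positivity)
  · rw [← tsum_one_div]
    refine Summable.tsum_le_tsum (fun j => ?_) (E_summable hε)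
      (by simpa using E_summable (ε := fun _ => 1) (fun j => Or.inr rfl))
    rcases hε j with h | h
    · rw [h, zero_div]; positivity
    · rw [h]

theorem twoE_sub_E_eq_Icc' :
    {z : ℝ | ∃ x ∈ E, ∃ y ∈ E, z = 2 * y - x} = Set.Icc (-(1 : ℝ) / 3) (2 / 3) := by
  ext z
  simp only [Set.mem_setOf_eq, Set.mem_Icc]
  constructor
  · rintro ⟨x, hx, y, hy, rfl⟩
    obtain ⟨hx0, hx1⟩ := E_bounds hx
    obtain ⟨hy0, hy1⟩ := E_bounds hy
    constructor <;> linarith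
  · rintro ⟨hz0, hz1⟩
    set t := z + 1/3 with ht
    have htm : t ∈ Set.Icc (0:ℝ) 1 := ⟨by simp [ht]; linarith, by simp [ht]; linarith⟩
    set ε : ℕ → ℝ := fun j => epsOf (dig t j) with hεdef
    set δ : ℕ → ℝ := fun j => delOf (dig t j) with hδdef
    have hεb : ∀ j, ε j = 0 ∨ ε j = 1 := fun j => epsOf_bit _
    have hδb : ∀ j, δ j = 0 ∨ δ j = 1 := fun j => delOf_bit _
    refine ⟨∑' j, ε j / 4 ^ (j+1), ⟨ε, hεb, rfl⟩, ∑' j, δ j / 4 ^ (j+1), ⟨δ, hδb, rfl⟩, ?_⟩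
    have hεs := E_summable hεb
    have hδs := E_summable hδb
    have hds : Summable (fun j => (dig t j : ℝ) / 4 ^ (j + 1)) := by
      apply summable_aux _ 3
      intro j
      rw [abs_of_nonneg (by positivity)]
      exact_mod_cast dig_le t j
    have h1s : Summable (fun j : ℕ => (1:ℝ) / 4 ^ (j + 1)) := by
      simpa using E_summable (ε := fun _ => 1) (fun j => Or.inr rfl)
    have step1 : 2 * ∑' j, δ j / 4 ^ (j+1) - ∑' j, ε j / 4 ^ (j+1)
        = ∑' j, (2 * (δ j / 4 ^ (j+1)) - ε j / 4 ^ (j+1)) := by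
      rw [Summable.tsum_sub (hδs.mul_left 2) hεs, tsum_mul_left]
    have step2 : ∀ j, 2 * (δ j / 4 ^ (j+1)) - ε j / 4 ^ (j+1)
        = (dig t j : ℝ) / 4 ^ (j+1) - 1 / 4 ^ (j+1) := by
      intro j
      have hc := combo (dig t j) (dig_le t j)
      have : 2 * (δ j / 4 ^ (j+1)) - ε j / 4 ^ (j+1) = (2 * δ j - ε j) / 4 ^ (j+1) := by
        ring
      rw [this, hεdef, hδdef]
      simp only []
      rw [hc]
      ring
    rw [step1]
    simp only [step2]
    rw [Summable.tsum_sub hds h1s, expansion htm, tsum_one_div]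
    rw [ht]
    ring

/-- `2E − E = [−1/3, 2/3]`; consequently every segment joining a point `a` of `[0,1/3]`
(on the line `y = 0`) to a point `b + i` of `[i, 2/3 + i]` (on the line `y = 1`) is
parallel to a segment joining a point `x` of `E` to a point `2y + i` of `2E + i`. -/
theorem twoE_sub_E_eq_Icc :
    {z : ℝ | ∃ x ∈ E, ∃ y ∈ E, z = 2 * y - x} = Set.Icc (-(1 : ℝ) / 3) (2 / 3) ∧
      ∀ a ∈ Set.Icc (0 : ℝ) (1 / 3), ∀ b ∈ Set.Icc (0 : ℝ) (2 / 3),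
        ∃ x ∈ E, ∃ y ∈ E,
          ((2 * y + Complex.I) - x : ℂ) = (b + Complex.I) - a := by
  refine ⟨twoE_sub_E_eq_Icc', ?_⟩
  intro a ha b hb
  have hmem : b - a ∈ Set.Icc (-(1:ℝ)/3) (2/3) :=
    ⟨by linarith [ha.1, ha.2, hb.1, hb.2], by linarith [ha.1, ha.2, hb.1, hb.2]⟩
  rw [← twoE_sub_E_eq_Icc'] at hmem
  obtain ⟨x, hx, y, hy, hz⟩ := hmem
  refine ⟨x, hx, y, hy, ?_⟩
  have h : ((b - a : ℝ) : ℂ) = ((2 * y - x : ℝ) : ℂ) := by norm_cast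
  push_cast at h
  linear_combination -h
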